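/- Let α be a real number and for each real t set a(t) = 3/2 − α·i·t, b(t) = −2 + (2α−2)·i·t, c(t) = 1/2 + (1−α)·i·t as complex numbers. Then the two Cohn–Schur conditions hold for all real t — namely |a(t)| ≥ |c(t)| and ||a(t)|² − |c(t)|²| ≥ |a(t)·conj(b(t)) − b(t)·conj(c(t))| — if and only if α ≥ 3/4. -/

import Mathlib

open Complex

lemma sqA (α t : ℝ) : ‖(3/2 - (α:ℂ) * I * t)‖^2 = 9/4 + α^2*t^2 := by
  rw [Complex.sq_norm, Complex.normSq_apply]; simp; ring

lemma sqC (α t : ℝ) : ‖(1/2 + (1 - (α:ℂ)) * I * t)‖^2 = 1/4 + (1-α)^2*t^2 := by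
  rw [Complex.sq_norm, Complex.normSq_apply]; simp; ring

lemma sqW (α t : ℝ) : ‖
            ((3/2 - (α : ℂ) * Complex.I * (t : ℂ))
                * (starRingEnd ℂ) (-2 + (2 * (α : ℂ) - 2) * Complex.I * (t : ℂ))
              - (-2 + (2 * (α : ℂ) - 2) * Complex.I * (t : ℂ))
                * (starRingEnd ℂ) (1/2 + (1 - (α : ℂ)) * Complex.I * (t : ℂ)))‖^2
    = (2+(2*α-2)*t^2)^2 + 4*t^2 := by
  rw [Complex.sq_norm, Complex.normSq_apply]; simp; ring

/-- Cohn–Schur conditions for the generalized BDF2 scheme: with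
a(t) = 3/2 − α·i·t, b(t) = −2 + (2α−2)·i·t, c(t) = 1/2 + (1−α)·i·t,
the conditions |a| ≥ |c| and ||a|² − |c|²| ≥ |a·conj(b) − b·conj(c)| hold for all real t
if and only if α ≥ 3/4. -/
theorem generalized_BDF2_CohnSchur_iff (α : ℝ) :
    (∀ t : ℝ,
      ‖3/2 - (α : ℂ) * Complex.I * (t : ℂ)‖
          ≥ ‖1/2 + (1 - (α : ℂ)) * Complex.I * (t : ℂ)‖ ∧
      |‖3/2 - (α : ℂ) * Complex.I * (t : ℂ)‖ ^ 2
          - ‖1/2 + (1 - (α : ℂ)) * Complex.I * (t : ℂ)‖ ^ 2|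
        ≥ ‖
            (3/2 - (α : ℂ) * Complex.I * (t : ℂ))
                * (starRingEnd ℂ) (-2 + (2 * (α : ℂ) - 2) * Complex.I * (t : ℂ))
              - (-2 + (2 * (α : ℂ) - 2) * Complex.I * (t : ℂ))
                * (starRingEnd ℂ) (1/2 + (1 - (α : ℂ)) * Complex.I * (t : ℂ))‖)
    ↔ α ≥ 3/4 := by
  constructor
  · intro h
    have h2 := (h 1).2
    have hsq : |‖(3/2 - (α : ℂ) * Complex.I * (1:ℝ))‖ ^ 2
          - ‖(1/2 + (1 - (α : ℂ)) * Complex.I * (1:ℝ))‖ ^ 2|^2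
        ≥ ‖
            ((3/2 - (α : ℂ) * Complex.I * ((1:ℝ) : ℂ))
                * (starRingEnd ℂ) (-2 + (2 * (α : ℂ) - 2) * Complex.I * ((1:ℝ) : ℂ))
              - (-2 + (2 * (α : ℂ) - 2) * Complex.I * ((1:ℝ) : ℂ))
                * (starRingEnd ℂ) (1/2 + (1 - (α : ℂ)) * Complex.I * ((1:ℝ) : ℂ)))‖^2 :=
      pow_le_pow_left₀ (norm_nonneg _) h2 2
    rw [_root_.sq_abs, sqW] at hsq
    rw [sqA α 1, sqC α 1] at hsq
    nlinarith [hsq]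
  · intro hα t
    constructor
    · rw [ge_iff_le, ← pow_le_pow_iff_left₀ (norm_nonneg _) (norm_nonneg _)
        two_ne_zero, sqA, sqC]
      nlinarith [sq_nonneg t]
    · rw [ge_iff_le, ← pow_le_pow_iff_left₀ (norm_nonneg _) (abs_nonneg _) two_ne_zero,
        sqW, _root_.sq_abs, sqA, sqC]
      nlinarith [sq_nonneg t, sq_nonneg (t^2), mul_nonneg (sq_nonneg t) (sq_nonneg t)]
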